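/- For any 0 < c ≤ 0.042, the quantity ((1+c/2)^(1+c/2) / ((c/2)^c · (1−c/2)^(1−c/2))) · exp(−(2−5c)²/(8(2−c))) is strictly less than 1. -/

import Mathlib

open Real

private lemma log_le_half_sub_inv {t : ℝ} (ht : 1 ≤ t) : Real.log t ≤ (t - t⁻¹) / 2 := by
  have h0 : (0:ℝ) < t := by linarith
  rcases eq_or_lt_of_le ht with h | h
  · simp [← h]
  · have hl : 0 < Real.log t := Real.log_pos h
    have := Real.self_lt_sinh_iff.mpr hl
    rw [Real.sinh_log h0] at this
    linarith

private lemma half_sub_inv_le_log {y : ℝ} (h0 : 0 < y) (h1 : y ≤ 1) :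
    (y - y⁻¹) / 2 ≤ Real.log y := by
  have h := log_le_half_sub_inv (t := y⁻¹) ((one_le_inv₀ h0).mpr h1)
  rw [Real.log_inv, inv_inv] at h
  linarith

private lemma log_bound : Real.log (1000 / 21 : ℝ) < 3.8646 := by
  have hs0 : (0:ℝ) < Real.sqrt 2 := Real.sqrt_pos.mpr (by norm_num)
  have hsq : Real.sqrt 2 ^ 2 = 2 := Real.sq_sqrt (by norm_num)
  have hs : Real.sqrt 2 < 1.41421357 := by nlinarith
  have hprod : (32 * Real.sqrt 2) * (125 * Real.sqrt 2 / 168) = 1000 / 21 := by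
    have : (32 * Real.sqrt 2) * (125 * Real.sqrt 2 / 168)
        = Real.sqrt 2 ^ 2 * (500 / 21) := by ring
    rw [this, hsq]; norm_num
  have hsplit : Real.log (1000 / 21 : ℝ)
      = Real.log (32 * Real.sqrt 2) + Real.log (125 * Real.sqrt 2 / 168) := by
    rw [← Real.log_mul (by positivity) (by positivity), hprod]
  have h32 : Real.log (32 * Real.sqrt 2) = 5 * Real.log 2 + Real.log 2 / 2 := by
    rw [Real.log_mul (by norm_num) (ne_of_gt hs0), Real.log_sqrt (by norm_num)]
    have : (32:ℝ) = 2 ^ 5 := by norm_num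
    rw [this, Real.log_pow]
    norm_num
  have htan : Real.log (125 * Real.sqrt 2 / 168) ≤ 125 * Real.sqrt 2 / 168 - 1 :=
    Real.log_le_sub_one_of_pos (by positivity)
  have hl2 : Real.log 2 < 0.6931471808 := Real.log_two_lt_d9
  have hl2' : 0 < Real.log 2 := Real.log_pos (by norm_num)
  rw [hsplit, h32]
  nlinarith

/-- The key real-analytic inequality in the substitution-only analysis:
for `0 < c ≤ 0.042`,
`((1+c/2)^(1+c/2) / ((c/2)^c · (1−c/2)^(1−c/2))) · exp(−(2−5c)²/(8(2−c))) < 1`. -/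
theorem sub_only_base_lt_one (c : ℝ) (hc0 : 0 < c) (hc : c ≤ 0.042) :
    (1 + c / 2) ^ (1 + c / 2) / ((c / 2) ^ c * (1 - c / 2) ^ (1 - c / 2)) *
      Real.exp (-(2 - 5 * c) ^ 2 / (8 * (2 - c))) < 1 := by
  have hx0 : (0:ℝ) < c / 2 := by linarith
  have hx1 : c / 2 ≤ 1 := by norm_num at hc ⊢; linarith
  have hp1 : (0:ℝ) < 1 + c / 2 := by linarith
  have hp2 : (0:ℝ) < 1 - c / 2 := by norm_num at hc ⊢; linarith
  rw [Real.rpow_def_of_pos hp1, Real.rpow_def_of_pos hx0, Real.rpow_def_of_pos hp2,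
    ← Real.exp_add, ← Real.exp_sub, ← Real.exp_add, Real.exp_lt_one_iff]
  -- bound the three logarithmic terms
  have hA : Real.log (1 + c / 2) * (1 + c / 2) ≤ c / 2 + c ^ 2 / 8 := by
    have h := log_le_half_sub_inv (t := 1 + c / 2) (by linarith)
    have h2 : Real.log (1 + c / 2) * (1 + c / 2)
        ≤ ((1 + c / 2) - (1 + c / 2)⁻¹) / 2 * (1 + c / 2) :=
      mul_le_mul_of_nonneg_right h (by linarith)
    have hinv : (1 + c / 2) * (1 + c / 2)⁻¹ = 1 := mul_inv_cancel₀ (ne_of_gt hp1)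
    nlinarith
  have hB : -(c / 2) + c ^ 2 / 8 ≤ Real.log (1 - c / 2) * (1 - c / 2) := by
    have h := half_sub_inv_le_log (y := 1 - c / 2) hp2 (by linarith)
    have h2 : ((1 - c / 2) - (1 - c / 2)⁻¹) / 2 * (1 - c / 2)
        ≤ Real.log (1 - c / 2) * (1 - c / 2) :=
      mul_le_mul_of_nonneg_right h (by linarith)
    have hinv : (1 - c / 2) * (1 - c / 2)⁻¹ = 1 := mul_inv_cancel₀ (ne_of_gt hp2)
    nlinarith
  have hC : c - 21 / 500 - 3.8646 * c ≤ Real.log (c / 2) * c := by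
    -- log (c/2) = log (c / (21/500)) + log (21/1000)
    have hsplit : Real.log (c / 2) = Real.log (c / (21 / 500)) - Real.log (1000 / 21) := by
      rw [show c / 2 = (c / (21 / 500)) / (1000 / 21) by ring,
        Real.log_div (by positivity) (by norm_num)]
    have h1 : 1 - (21 / 500) / c ≤ Real.log (c / (21 / 500)) := by
      have h := Real.log_le_sub_one_of_pos (x := (21 / 500) / c) (by positivity)
      have : Real.log ((21 / 500) / c) = - Real.log (c / (21 / 500)) := by
        rw [← Real.log_inv]; congr 1; field_simp
      linarith
    have h2 : Real.log (1000 / 21 : ℝ) < 3.8646 := log_bound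
    have h3 : c * (1 - (21 / 500) / c) = c - 21 / 500 := by field_simp
    have h4 : c * (Real.log (c / (21 / 500)) - Real.log (1000 / 21))
        = Real.log (c / 2) * c := by rw [hsplit]; ring
    nlinarith [mul_le_mul_of_nonneg_left h1 (le_of_lt hc0)]
  -- final polynomial inequality
  have h2c : (0:ℝ) < 2 - c := by norm_num at hc ⊢; linarith
  have hQ : 21 / 500 + 3.8646 * c < (2 - 5 * c) ^ 2 / (8 * (2 - c)) := by
    rw [lt_div_iff₀ (by linarith)]
    norm_num at hc ⊢
    nlinarith [mul_nonneg (sub_nonneg.mpr hc) (le_of_lt hc0), sq_nonneg c,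
      mul_nonneg (sub_nonneg.mpr hc) (sub_nonneg.mpr hc)]
  have hexp : -(2 - 5 * c) ^ 2 / (8 * (2 - c)) = -((2 - 5 * c) ^ 2 / (8 * (2 - c))) := by
    ring
  rw [hexp]
  linarith
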